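/- (Strict convexity.) Assume the matrices $B_1,\dots,B_{r_*}$ are linearly independent symmetric matrices. Then for every $\lambda\in\mathcal{D}$, the Hessian of $G(\lambda) = \mathrm{tr}(M(\lambda)^{-1}) + \langle\lambda,y\rangle$ is positive definite; hence $G$ is strictly convex on $\mathcal{D}$. -/

import Mathlib

open Matrix BigOperators ContinuousLinearMap

namespace HessAux
attribute [local instance] Matrix.linftyOpNormedRing Matrix.linftyOpNormedAlgebra

abbrev Mat (n : ℕ) := Matrix (Fin n) (Fin n) ℝ

variable {n : ℕ}

noncomputable def traceCLM (n : ℕ) : Mat n →L[ℝ] ℝ :=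
  LinearMap.toContinuousLinearMap (Matrix.traceLinearMap (Fin n) ℝ ℝ)

@[simp] lemma traceCLM_apply (A : Mat n) : traceCLM n A = A.trace := rfl

noncomputable def D0 (B : Fin n → Mat n) : (Fin n → ℝ) →L[ℝ] Mat n :=
  ∑ r, (ContinuousLinearMap.proj r : (Fin n → ℝ) →L[ℝ] ℝ).smulRight (B r)

@[simp] lemma D0_apply (B : Fin n → Mat n) (v : Fin n → ℝ) : D0 B v = ∑ r, v r • B r := by
  simp [D0]

variable (B : Fin n → Mat n)

def Mm (l : Fin n → ℝ) : Mat n := 1 + ∑ r, l r • B r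

lemma hasFDerivAt_Mm (l : Fin n → ℝ) : HasFDerivAt (Mm B) (D0 B) l := by
  have h : (Mm B) = fun l : Fin n → ℝ => (1 : Mat n) + D0 B l := by
    funext l'; simp [Mm]
  rw [h]
  exact (D0 B).hasFDerivAt.const_add 1

noncomputable def invD (l : Fin n → ℝ) : (Fin n → ℝ) →L[ℝ] Mat n :=
  -((mulLeftRight ℝ (Mat n) (Mm B l)⁻¹ (Mm B l)⁻¹).comp (D0 B))

@[simp] lemma invD_apply (l v : Fin n → ℝ) :
    invD B l v = -((Mm B l)⁻¹ * (∑ r, v r • B r) * (Mm B l)⁻¹) := by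
  show -(mulLeftRight ℝ (Mat n) (Mm B l)⁻¹ (Mm B l)⁻¹ (D0 B v)) = _
  simp [invD, ContinuousLinearMap.neg_comp, mulLeftRight_apply, Finset.mul_sum, Finset.sum_mul, Matrix.mul_smul, Matrix.smul_mul]

lemma hasFDerivAt_inv (l : Fin n → ℝ) (hl : IsUnit (Mm B l)) :
    HasFDerivAt (fun l' => (Mm B l')⁻¹) (invD B l) l := by
  obtain ⟨u, hu⟩ := hl
  have h1 : HasFDerivAt (fun l' => Ring.inverse (Mm B l'))
      ((-mulLeftRight ℝ (Mat n) ↑u⁻¹ ↑u⁻¹).comp (D0 B)) l := by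
    have h0 := (hasFDerivAt_ringInverse (𝕜 := ℝ) (R := Mat n) u)
    rw [hu] at h0
    exact h0.comp l (hasFDerivAt_Mm B l)
  have h2 : (fun l' => Ring.inverse (Mm B l')) = fun l' => (Mm B l')⁻¹ := by
    funext l'; rw [Matrix.nonsing_inv_eq_ringInverse]
  rw [h2] at h1
  have h3 : ((-mulLeftRight ℝ (Mat n) ↑u⁻¹ ↑u⁻¹).comp (D0 B)) = invD B l := by
    have hc : (↑u⁻¹ : Mat n) = (Mm B l)⁻¹ := by rw [← hu, Matrix.coe_units_inv]
    rw [invD, hc]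
    ext v
    rfl
  rwa [h3] at h1

variable (y : Fin n → ℝ)

noncomputable def yCLM : (Fin n → ℝ) →L[ℝ] ℝ :=
  ∑ r, (ContinuousLinearMap.proj r : (Fin n → ℝ) →L[ℝ] ℝ).smulRight (y r)

@[simp] lemma yCLM_apply (v : Fin n → ℝ) : yCLM y v = ∑ r, v r * y r := by
  simp [yCLM, smul_eq_mul]

noncomputable def fval (l : Fin n → ℝ) : ℝ := ((Mm B l)⁻¹).trace + ∑ r, l r * y r

noncomputable def fD (l : Fin n → ℝ) : (Fin n → ℝ) →L[ℝ] ℝ :=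
  (traceCLM n).comp (invD B l) + yCLM y

@[simp] lemma fD_apply (l v : Fin n → ℝ) :
    fD B y l v = -((Mm B l)⁻¹ * (∑ r, v r • B r) * (Mm B l)⁻¹).trace + ∑ r, v r * y r := by
  simp [fD]

lemma hasFDerivAt_f (l : Fin n → ℝ) (hl : IsUnit (Mm B l)) :
    HasFDerivAt (fval B y) (fD B y l) l := by
  have h1 : HasFDerivAt (fun l' => ((Mm B l')⁻¹).trace) ((traceCLM n).comp (invD B l)) l :=
    (traceCLM n).hasFDerivAt.comp l (hasFDerivAt_inv B l hl)
  have h2 : HasFDerivAt (fun l' : Fin n → ℝ => ∑ r, l' r * y r) (yCLM y) l := by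
    have h := (yCLM y).hasFDerivAt (x := l)
    have he : ⇑(yCLM y) = fun l' : Fin n → ℝ => ∑ r, l' r * y r := funext fun v => yCLM_apply y v
    rwa [he] at h
  exact h1.add h2

noncomputable def qD (l μ : Fin n → ℝ) : (Fin n → ℝ) →L[ℝ] ℝ :=
  -((traceCLM n).comp
      (((Mm B l)⁻¹ * (∑ r, μ r • B r)) • invD B l +
        ((invD B l).smulRight (∑ r, μ r • B r)).smulRight (Mm B l)⁻¹))

lemma qD_apply_self (l μ : Fin n → ℝ) :
    qD B l μ μ
      = 2 * ((Mm B l)⁻¹ * (∑ r, μ r • B r) * (Mm B l)⁻¹ * (∑ r, μ r • B r) * (Mm B l)⁻¹).trace := by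
  simp [qD, smul_eq_mul, Matrix.trace_neg, mul_assoc, two_mul, Matrix.trace_add,
    Matrix.neg_mul, Matrix.mul_neg]

lemma hasFDerivAt_fD (l μ : Fin n → ℝ) (hl : IsUnit (Mm B l)) :
    HasFDerivAt (fun l' => fD B y l' μ) (qD B l μ) l := by
  set N := ∑ r, μ r • B r with hN
  have ha : HasFDerivAt (fun l' => (Mm B l')⁻¹ * N) ((invD B l).smulRight N) l :=
    (hasFDerivAt_inv B l hl).mul_const' N
  have hb := ha.mul' (hasFDerivAt_inv B l hl)
  have h3 := ((traceCLM n).hasFDerivAt.comp l hb).neg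
  have h4 := h3.add_const (∑ r, μ r * y r)
  have he : (fun l' => fD B y l' μ)
      = fun l' => -(((Mm B l')⁻¹ * N) * (Mm B l')⁻¹).trace + ∑ r, μ r * y r := by
    funext l'; rw [fD_apply]
  rw [he]
  exact h4.congr_fderiv (by
    ext v
    show -(traceCLM n (((Mm B l)⁻¹ * N) * invD B l v + invD B l v * N * (Mm B l)⁻¹)) = qD B l μ v
    simp [qD, Matrix.mul_assoc, hN])

/-- positivity of `trace (Kᵀ * W * K)` for `W` posdef, `K ≠ 0`. -/
lemma trace_conj_pos {W K : Mat n} (hW : W.PosDef) (hK : K ≠ 0) :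
    0 < (Kᵀ * W * K).trace := by
  have key : ∀ i, (Kᵀ * W * K) i i
      = dotProduct (fun j => K j i) (W *ᵥ fun j => K j i) := by
    intro i
    simp only [Matrix.mul_apply, Matrix.transpose_apply, dotProduct, Matrix.mulVec,
      Finset.sum_mul, Finset.mul_sum]
    rw [Finset.sum_comm]
    refine Finset.sum_congr rfl fun j _ => Finset.sum_congr rfl fun k _ => by ring
  have hnn : ∀ i, 0 ≤ (Kᵀ * W * K) i i := by
    intro i
    rw [key i]
    rcases eq_or_ne (fun j => K j i) 0 with h | h
    · simp [h]
    · have := hW.dotProduct_mulVec_pos h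
      simpa using this.le
  obtain ⟨i0, hi0⟩ : ∃ i, (fun j => K j i) ≠ 0 := by
    by_contra hcon
    push_neg at hcon
    apply hK
    ext j i
    have := congrFun (hcon i) j
    simpa using this
  have hpos : 0 < (Kᵀ * W * K) i0 i0 := by
    rw [key i0]
    simpa using hW.dotProduct_mulVec_pos hi0
  rw [Matrix.trace]
  exact Finset.sum_pos' (fun i _ => hnn i) ⟨i0, Finset.mem_univ _, hpos⟩

open scoped MatrixOrder in
lemma trace_five_pos {W N : Mat n} (hW : W.PosDef) (hNs : Nᵀ = N) (hN : N ≠ 0) :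
    0 < (W * N * W * N * W).trace := by
  classical
  set S : Mat n := CFC.sqrt W with hS
  have hSS : S * S = W := CFC.sqrt_mul_sqrt_self W (Matrix.nonneg_iff_posSemidef.mpr hW.posSemidef)
  have hSsym : Sᵀ = S := by
    have h := (Matrix.nonneg_iff_posSemidef.mp (CFC.sqrt_nonneg W)).isHermitian
    rwa [Matrix.IsHermitian, Matrix.conjTranspose_eq_transpose_of_trivial] at h
  have hdet : IsUnit S.det := by
    have h1 : S.det * S.det = W.det := by rw [← Matrix.det_mul, hSS]
    have h2 : W.det ≠ 0 := (hW.det_pos).ne'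
    refine isUnit_iff_ne_zero.mpr fun h0 => h2 ?_
    rw [← h1, h0, mul_zero]
  have hX : S * N * S ≠ 0 := by
    intro h0
    apply hN
    have : S⁻¹ * (S * N * S) * S⁻¹ = N := by
      have e : S⁻¹ * (S * N * S) * S⁻¹ = (S⁻¹ * S) * (N * (S * S⁻¹)) := by
        simp only [Matrix.mul_assoc]
      rw [e, Matrix.nonsing_inv_mul S hdet, Matrix.mul_nonsing_inv S hdet]
      simp
    rw [← this, h0]
    simp
  have hXt : (S * N * S)ᵀ = S * N * S := by
    simp [Matrix.transpose_mul, hSsym, hNs, Matrix.mul_assoc]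
  have e1 : W * N * W * N * W = S * (((S * N * S) * (S * N * S)) * S) := by
    rw [← hSS]; simp only [Matrix.mul_assoc]
  have e2 : (W * N * W * N * W).trace = ((S * N * S)ᵀ * W * (S * N * S)).trace := by
    rw [e1, Matrix.trace_mul_comm]
    rw [hXt]
    rw [show ((S * N * S) * (S * N * S)) * S * S = (S * N * S) * ((S * N * S) * W) by
      rw [← hSS]; simp only [Matrix.mul_assoc]]
    rw [Matrix.trace_mul_comm]
  rw [e2]
  exact trace_conj_pos hW hX

lemma Nsymm (hsymm : ∀ r, (B r).IsSymm) (μ : Fin n → ℝ) :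
    (∑ r, μ r • B r)ᵀ = ∑ r, μ r • B r := by
  rw [Matrix.transpose_sum]
  exact Finset.sum_congr rfl fun r _ => by rw [Matrix.transpose_smul, (hsymm r).eq]

lemma Nne (hli : LinearIndependent ℝ B) {μ : Fin n → ℝ} (hμ : μ ≠ 0) :
    (∑ r, μ r • B r) ≠ 0 := by
  intro h0
  apply hμ
  funext r
  exact Fintype.linearIndependent_iff.mp hli μ h0 r

lemma Mm_comb (a b : ℝ) (hab : a + b = 1) (x z : Fin n → ℝ) :
    Mm B (a • x + b • z) = a • Mm B x + b • Mm B z := by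
  unfold Mm
  have hr : ∀ r : Fin n, ((a • x + b • z) r) • B r = a • ((x r) • B r) + b • ((z r) • B r) :=
    fun r => by simp [add_smul, smul_smul]
  rw [Finset.sum_congr rfl (fun r _ => hr r), Finset.sum_add_distrib]
  rw [smul_add, smul_add, ← Finset.smul_sum, ← Finset.smul_sum]
  have h1 : a • (1 : Mat n) + b • (1 : Mat n) = 1 := by rw [← add_smul, hab, one_smul]
  nth_rewrite 1 [← h1]
  abel

lemma posDef_comb {a b : ℝ} (ha : 0 ≤ a) (hb : 0 ≤ b) (hab : a + b = 1)
    {P Q : Mat n} (hP : P.PosDef) (hQ : Q.PosDef) : (a • P + b • Q).PosDef := by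
  rcases ha.lt_or_eq with ha' | ha'
  · rcases hb.lt_or_eq with hb' | hb'
    · refine Matrix.PosDef.of_dotProduct_mulVec_pos ?_ ?_
      · show (a • P + b • Q)ᴴ = a • P + b • Q
        rw [Matrix.conjTranspose_add, Matrix.conjTranspose_smul, Matrix.conjTranspose_smul,
          hP.1.eq, hQ.1.eq, star_trivial, star_trivial]
      · intro x hx
        have hP2 := hP.dotProduct_mulVec_pos hx
        have hQ2 := hQ.dotProduct_mulVec_pos hx
        rw [Matrix.add_mulVec, Matrix.smul_mulVec, Matrix.smul_mulVec,
          dotProduct_add, dotProduct_smul, dotProduct_smul, smul_eq_mul, smul_eq_mul]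
        exact add_pos (mul_pos ha' hP2) (mul_pos hb' hQ2)
    · have ha1 : a = 1 := by linarith
      rw [← hb', ha1]
      simpa using hP
  · have hb1 : b = 1 := by linarith
    rw [← ha', hb1]
    simpa using hQ

lemma convex_posdef : Convex ℝ {l : Fin n → ℝ | (Mm B l).PosDef} := by
  intro x hx z hz a b ha hb hab
  show (Mm B (a • x + b • z)).PosDef
  rw [Mm_comb B a b hab]
  exact posDef_comb ha hb hab hx hz

lemma strictConvexOn_of_segments {s : Set (Fin n → ℝ)} {f : (Fin n → ℝ) → ℝ} (hs : Convex ℝ s)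
    (h : ∀ x ∈ s, ∀ z ∈ s, x ≠ z →
      StrictConvexOn ℝ (Set.Icc (0:ℝ) 1) fun t => f (x + t • (z - x))) :
    StrictConvexOn ℝ s f := by
  refine ⟨hs, fun x hx z hz hxz a b ha hb hab => ?_⟩
  have h01 : (0:ℝ) ∈ Set.Icc (0:ℝ) 1 := by constructor <;> norm_num
  have h11 : (1:ℝ) ∈ Set.Icc (0:ℝ) 1 := by constructor <;> norm_num
  have hkey := (h x hx z hz hxz).2 h01 h11 (by norm_num) ha hb hab
  have e0 : x + (0:ℝ) • (z - x) = x := by simp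
  have e1p : x + (1:ℝ) • (z - x) = z := by simp
  have eb : x + b • (z - x) = a • x + b • z := by
    rw [smul_sub, show a = 1 - b by linarith, sub_smul, one_smul]
    abel
  simpa [e0, e1p, eb] using hkey

lemma segment_strict (hsymm : ∀ r, (B r).IsSymm) (hli : LinearIndependent ℝ B)
    (x z : Fin n → ℝ) (hx : (Mm B x).PosDef) (hz : (Mm B z).PosDef) (hxz : x ≠ z) :
    StrictConvexOn ℝ (Set.Icc (0:ℝ) 1) fun t => fval B y (x + t • (z - x)) := by
  set v := z - x with hv
  have hv0 : v ≠ 0 := sub_ne_zero.mpr (Ne.symm hxz)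
  have hline : ∀ t : ℝ, HasDerivAt (fun t : ℝ => x + t • v) v t := fun t => by
    simpa using ((hasDerivAt_id t).smul_const v).const_add x
  have hseg : ∀ t ∈ Set.Icc (0:ℝ) 1, (Mm B (x + t • v)).PosDef := by
    intro t ht
    have he : x + t • v = (1 - t) • x + t • z := by
      rw [hv, smul_sub, sub_smul, one_smul]; abel
    rw [he, Mm_comb B _ _ (by ring)]
    exact posDef_comb (by linarith [ht.2]) ht.1 (by ring) hx hz
  have hcont : Continuous fun t : ℝ => Mm B (x + t • v) := by
    have h : (fun t : ℝ => Mm B (x + t • v)) = fun t : ℝ => (1 : Mat n) + D0 B (x + t • v) := by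
      funext t; simp [Mm]
    rw [h]
    exact continuous_const.add ((D0 B).continuous.comp (by continuity))
  have hUopen : IsOpen {t : ℝ | IsUnit (Mm B (x + t • v))} := Units.isOpen.preimage hcont
  have hsub : Set.Icc (0:ℝ) 1 ⊆ {t : ℝ | IsUnit (Mm B (x + t • v))} := fun t ht =>
    (hseg t ht).isUnit
  have hg' : ∀ t ∈ {t : ℝ | IsUnit (Mm B (x + t • v))},
      HasDerivAt (fun s => fval B y (x + s • v)) (fD B y (x + t • v) v) t := fun t ht =>
    by have := (hasFDerivAt_f B y _ ht).comp_hasDerivAt t (hline t); exact this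
  apply strictConvexOn_of_deriv2_pos (convex_Icc 0 1)
  · intro t ht
    exact ((hg' t (hsub ht)).continuousAt).continuousWithinAt
  · intro t ht
    rw [interior_Icc] at ht
    have htI : t ∈ Set.Icc (0:ℝ) 1 := Set.mem_Icc.mpr ⟨ht.1.le, ht.2.le⟩
    have htU : IsUnit (Mm B (x + t • v)) := hsub htI
    have hnhds : {t : ℝ | IsUnit (Mm B (x + t • v))} ∈ nhds t := hUopen.mem_nhds htU
    have hd1 : deriv (fun s => fval B y (x + s • v)) =ᶠ[nhds t] fun s => fD B y (x + s • v) v :=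
      Filter.eventually_of_mem hnhds fun s hs => (hg' s hs).deriv
    have hd2 : HasDerivAt (fun s => fD B y (x + s • v) v) (qD B (x + t • v) v v) t :=
      by have := (hasFDerivAt_fD B y _ v htU).comp_hasDerivAt t (hline t); exact this
    have hder2 : deriv (deriv (fun s => fval B y (x + s • v))) t = qD B (x + t • v) v v := by
      rw [Filter.EventuallyEq.deriv_eq hd1]
      exact hd2.deriv
    have hpos : 0 < qD B (x + t • v) v v := by
      rw [qD_apply_self]
      have hpd := (hseg t htI).inv
      have h5 := trace_five_pos hpd (Nsymm B hsymm v) (Nne B hli hv0)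
      linarith
    have h2 : deriv^[2] (fun s => fval B y (x + s • v)) t
        = deriv (deriv (fun s => fval B y (x + s • v))) t := rfl
    rw [h2, hder2]
    exact hpos

end HessAux

open HessAux in
theorem hessian_posdef_and_strict_convexity
    (rs : ℕ) (B : Fin rs → Matrix (Fin rs) (Fin rs) ℝ)
    (hsymm : ∀ r, (B r).IsSymm)
    (hli : LinearIndependent ℝ B) (y : Fin rs → ℝ) :
    (∀ lam : Fin rs → ℝ,
        ((1 : Matrix (Fin rs) (Fin rs) ℝ) + ∑ r, lam r • B r).PosDef →
        ∀ μ : Fin rs → ℝ, μ ≠ 0 →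
          0 < iteratedFDeriv ℝ 2
              (fun l : Fin rs → ℝ =>
                (((1 : Matrix (Fin rs) (Fin rs) ℝ) + ∑ r, l r • B r)⁻¹).trace
                  + ∑ r, l r * y r)
              lam (fun _ => μ)) ∧
    StrictConvexOn ℝ
      {lam : Fin rs → ℝ | ((1 : Matrix (Fin rs) (Fin rs) ℝ) + ∑ r, lam r • B r).PosDef}
      (fun lam : Fin rs → ℝ =>
        (((1 : Matrix (Fin rs) (Fin rs) ℝ) + ∑ r, lam r • B r)⁻¹).trace
          + ∑ r, lam r * y r) := by
  letI : NormedRing (Matrix (Fin rs) (Fin rs) ℝ) := Matrix.linftyOpNormedRing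
  letI : NormedAlgebra ℝ (Matrix (Fin rs) (Fin rs) ℝ) := Matrix.linftyOpNormedAlgebra
  constructor
  · intro lam hpd μ hμ
    have hl : IsUnit (Mm B lam) := hpd.isUnit
    obtain ⟨u, hu⟩ := hl
    show 0 < iteratedFDeriv ℝ 2 (fval B y) lam fun _ => μ
    rw [iteratedFDeriv_two_apply]
    have hcont : Continuous (Mm B) := by
      have h : (Mm B) = fun l => (1 : Mat rs) + D0 B l := funext fun l => by simp [Mm]
      rw [h]
      exact continuous_const.add (D0 B).continuous
    have hUopen : IsOpen {l : Fin rs → ℝ | IsUnit (Mm B l)} := Units.isOpen.preimage hcont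
    have hmem : {l : Fin rs → ℝ | IsUnit (Mm B l)} ∈ nhds lam := hUopen.mem_nhds ⟨u, hu⟩
    have hMmCD : ContDiff ℝ 2 (Mm B) := by
      have h : (Mm B) = fun l => (1 : Mat rs) + D0 B l := funext fun l => by simp [Mm]
      rw [h]
      exact contDiff_const.add (D0 B).contDiff
    have hinvCD : ContDiffAt ℝ 2 (fun l => (Mm B l)⁻¹) lam := by
      have h1 : ContDiffAt ℝ 2 (Ring.inverse : Mat rs → Mat rs) (Mm B lam) := by
        rw [← hu]
        exact contDiffAt_ringInverse ℝ u
      have h2 := h1.comp lam hMmCD.contDiffAt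
      have h3 : (Ring.inverse : Mat rs → Mat rs) ∘ (Mm B) = fun l => (Mm B l)⁻¹ :=
        funext fun l => (Matrix.nonsing_inv_eq_ringInverse _).symm
      rwa [h3] at h2
    have hfCD : ContDiffAt ℝ 2 (fval B y) lam := by
      have h4 : ContDiffAt ℝ 2 (fun l => ((Mm B l)⁻¹).trace) lam :=
        (traceCLM rs).contDiff.contDiffAt.comp lam hinvCD
      have h5 : ContDiff ℝ 2 (fun l : Fin rs → ℝ => ∑ r, l r * y r) := by
        have h : (fun l : Fin rs → ℝ => ∑ r, l r * y r) = fun l => yCLM y l :=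
          funext fun l => (yCLM_apply y l).symm
        rw [h]
        exact (yCLM y).contDiff
      exact h4.add h5.contDiffAt
    have hdp : DifferentiableAt ℝ (fderiv ℝ (fval B y)) lam :=
      (hfCD.fderiv_right (m := 1) (by norm_num)).differentiableAt (by norm_num)
    have key1 : fderiv ℝ (fderiv ℝ (fval B y)) lam μ μ
        = fderiv ℝ (fun l => fderiv ℝ (fval B y) l μ) lam μ := by
      have hc := ((ContinuousLinearMap.apply ℝ ℝ μ).hasFDerivAt.comp lam hdp.hasFDerivAt).fderiv
      have he : (fun l => fderiv ℝ (fval B y) l μ)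
          = (ContinuousLinearMap.apply ℝ ℝ μ) ∘ (fderiv ℝ (fval B y)) := rfl
      rw [he, hc]
      simp
    have key2 : fderiv ℝ (fun l => fderiv ℝ (fval B y) l μ) lam = qD B lam μ := by
      have hev : (fun l => fderiv ℝ (fval B y) l μ) =ᶠ[nhds lam] fun l => fD B y l μ :=
        Filter.eventually_of_mem hmem fun l hl' => by
          show fderiv ℝ (fval B y) l μ = fD B y l μ
          rw [(hasFDerivAt_f B y l hl').fderiv]
      rw [hev.fderiv_eq]
      exact (hasFDerivAt_fD B y lam μ ⟨u, hu⟩).fderiv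
    have hpos : 0 < qD B lam μ μ := by
      rw [qD_apply_self]
      have hpd' : ((Mm B lam)⁻¹).PosDef := Matrix.PosDef.inv hpd
      have h5 := trace_five_pos hpd' (Nsymm B hsymm μ) (Nne B hli hμ)
      linarith
    show 0 < fderiv ℝ (fderiv ℝ (fval B y)) lam μ μ
    rw [key1, key2]
    exact hpos
  · show StrictConvexOn ℝ {lam | (Mm B lam).PosDef} (fval B y)
    apply strictConvexOn_of_segments (convex_posdef B)
    intro x hx z hz hxz
    exact segment_strict B y hsymm hli x z hx hz hxz
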